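/- Let q ≥ 2 be a prime power, m ≥ 2, n = q^m - 1, and let i be an integer with 3 ≤ i ≤ m - (⌊(m-1)/2⌋ + ⌊(m-3)/3⌋). Then the q-cyclotomic coset of δ_i = (q-1)q^{m-1} - 1 - q^{⌊(m-1)/2⌋ + i - 2} modulo n has exactly m elements. -/

import Mathlib

private lemma pow_swap_notlt {q : ℕ} (hq : 2 ≤ q) {a b c d : ℕ} (hab : a ≤ b) (hcd : c ≤ d)
    (h : q ^ a + q ^ b = q ^ c + q ^ d) : ¬ a < c := by
  intro hlt
  have hq1 : 1 ≤ q := by omega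
  rcases Nat.eq_or_lt_of_le hab with hb | hb
  · -- a = b
    have h1 : q ^ (a + 1) ≤ q ^ c := Nat.pow_le_pow_right hq1 hlt
    have h2 : q ^ (a + 1) ≤ q ^ d := Nat.pow_le_pow_right hq1 (lt_of_lt_of_le hlt hcd)
    have h3 : q ^ (a + 1) = q ^ a * q := pow_succ q a
    have h4 : 1 ≤ q ^ a := Nat.one_le_pow a q (by omega)
    have h5 : 2 * q ^ a ≤ q ^ (a + 1) := by nlinarith
    rw [← hb] at h
    linarith
  · -- a < b
    have hdvd : q ^ (a + 1) ∣ q ^ b + q ^ a := by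
      rw [Nat.add_comm (q ^ b) (q ^ a), h]
      exact dvd_add (pow_dvd_pow q hlt) (pow_dvd_pow q (lt_of_lt_of_le hlt hcd))
    have hdvd2 : q ^ (a + 1) ∣ q ^ a := (Nat.dvd_add_right (pow_dvd_pow q hb)).mp hdvd
    have h6 : q ^ (a + 1) ≤ q ^ a := Nat.le_of_dvd (Nat.pow_pos (by omega : 0 < q)) hdvd2
    have h7 : q ^ a < q ^ (a + 1) := Nat.pow_lt_pow_right (by omega) (Nat.lt_succ_self a)
    omega

private lemma pow_swap_aux {q : ℕ} (hq : 2 ≤ q) {a b c d : ℕ} (hab : a ≤ b) (hcd : c ≤ d)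
    (h : q ^ a + q ^ b = q ^ c + q ^ d) : a = c ∧ b = d := by
  have h1 := pow_swap_notlt hq hab hcd h
  have h2 := pow_swap_notlt hq hcd hab h.symm
  have hac : a = c := by omega
  subst hac
  have hbd : q ^ b = q ^ d := by omega
  exact ⟨rfl, Nat.pow_right_injective hq hbd⟩

private lemma pow_swap {q : ℕ} (hq : 2 ≤ q) {a b c d : ℕ}
    (h : q ^ a + q ^ b = q ^ c + q ^ d) : (a = c ∧ b = d) ∨ (a = d ∧ b = c) := by
  rcases le_total a b with hab | hba <;> rcases le_total c d with hcd | hdc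
  · exact Or.inl (pow_swap_aux hq hab hcd h)
  · obtain ⟨h1, h2⟩ := pow_swap_aux hq hab hdc (by rwa [Nat.add_comm (q ^ c) (q ^ d)] at h)
    exact Or.inr ⟨h1, h2⟩
  · obtain ⟨h1, h2⟩ := pow_swap_aux hq hba hcd (by rwa [Nat.add_comm (q ^ a) (q ^ b)] at h)
    exact Or.inr ⟨h2, h1⟩
  · obtain ⟨h1, h2⟩ := pow_swap_aux hq hba hdc
      (by rw [Nat.add_comm (q ^ a) (q ^ b), Nat.add_comm (q ^ c) (q ^ d)] at h; exact h)
    exact Or.inl ⟨h2, h1⟩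

/-- the q-cyclotomic coset of δ_i modulo n = q^m - 1 has exactly m
elements. -/
theorem stmt_1 (q m i : ℕ) (hq : IsPrimePow q) (hm : 2 ≤ m)
    (hi3 : 3 ≤ i) (hi : i ≤ m - ((m - 1) / 2 + (m - 3) / 3)) :
    (Finset.image
      (fun j : ℕ =>
        ((q - 1) * q ^ (m - 1) - 1 - q ^ ((m - 1) / 2 + i - 2)) * q ^ j % (q ^ m - 1))
      (Finset.range m)).card = m := by
  have hq2 : 2 ≤ q := hq.two_le
  have hq1 : 1 ≤ q := by omega
  set s : ℕ := (m - 1) / 2 + i - 2 with hs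
  set δ : ℕ := (q - 1) * q ^ (m - 1) - 1 - q ^ s with hδdef
  set n : ℕ := q ^ m - 1 with hn
  have key : i + ((m - 1) / 2 + (m - 3) / 3) ≤ m := by omega
  have hm4 : 4 ≤ m := by omega
  have hsm : s ≤ m - 2 := by omega
  have h2s : m ≤ 2 * s := by omega
  have hqmpos : ∀ u : ℕ, 1 ≤ q ^ u := fun u => Nat.one_le_pow u q (by omega)
  have hpow_m : q ^ (m - 1) * q = q ^ m := by
    rw [← pow_succ]; congr 1; omega
  have hpow_m1 : q ^ (m - 2) * q = q ^ (m - 1) := by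
    rw [← pow_succ]; congr 1; omega
  have hqm2 : 2 ≤ q ^ (m - 2) := le_trans hq2 (Nat.le_self_pow (by omega) q)
  have hbig : q ^ (m - 1) + q ^ (m - 2) + 2 ≤ q ^ m := by
    have a1 : q ^ (m - 1) * 2 ≤ q ^ (m - 1) * q := Nat.mul_le_mul_left _ hq2
    have a2 : q ^ (m - 2) * 2 ≤ q ^ (m - 2) * q := Nat.mul_le_mul_left _ hq2
    linarith [hpow_m, hpow_m1, hqm2]
  have hnq : n + 1 = q ^ m := by rw [hn]; exact Nat.sub_add_cancel (hqmpos m)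
  have hδr : δ + (q ^ (m - 1) + q ^ s) = n := by
    have h3 : q ^ s ≤ q ^ (m - 2) := Nat.pow_le_pow_right hq1 hsm
    have h4 : q ^ (m - 1) ≤ (q - 1) * q ^ (m - 1) := by
      have h5 := hqmpos (m - 1); nlinarith [Nat.sub_add_cancel hq1]
    have hle1 : 1 + q ^ s ≤ (q - 1) * q ^ (m - 1) := by nlinarith
    have e1 : δ = (q - 1) * q ^ (m - 1) - (1 + q ^ s) := by rw [hδdef, Nat.sub_sub]
    have e2 : δ + (1 + q ^ s) = (q - 1) * q ^ (m - 1) := by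
      rw [e1]; exact Nat.sub_add_cancel hle1
    have e3 : (q - 1) * q ^ (m - 1) + q ^ (m - 1) = q ^ m := by
      have e5 : (q - 1) * q ^ (m - 1) + q ^ (m - 1) = ((q - 1) + 1) * q ^ (m - 1) := by ring
      rw [e5, show q - 1 + 1 = q from by omega, mul_comm, hpow_m]
    linarith
  have hnpos : 0 < n := by
    have : 2 ≤ q ^ m := le_trans hq2 (Nat.le_self_pow (by omega) q)
    omega
  have hcop : Nat.Coprime n (q ^ m) := by
    rw [← hnq]
    exact Nat.coprime_self_add_right.mpr (Nat.coprime_one_right n)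
  have hqm_mod : q ^ m ≡ 1 [MOD n] := by
    exact ((Nat.modEq_iff_dvd' (hqmpos m)).mpr (hn ▸ dvd_refl n)).symm
  have core : ∀ a b : ℕ, a < b → b < m → δ * q ^ a % n ≠ δ * q ^ b % n := by
    intro a b hab hbm hEq
    set e : ℕ := b - a with he
    have he1 : 1 ≤ e := by omega
    have hem : e ≤ m - 1 := by omega
    have hmod : δ * q ^ a ≡ δ * q ^ b [MOD n] := hEq
    have hleab : δ * q ^ a ≤ δ * q ^ b :=
      Nat.mul_le_mul (le_refl δ) (Nat.pow_le_pow_right hq1 (le_of_lt hab))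
    have hdvd0 : n ∣ δ * q ^ b - δ * q ^ a := (Nat.modEq_iff_dvd' hleab).mp hmod
    have hsplit : δ * (q ^ e - 1) * q ^ a = δ * q ^ b - δ * q ^ a := by
      have hb : b = e + a := by omega
      rw [Nat.mul_sub δ (q ^ e) 1, mul_one, Nat.sub_mul (δ * q ^ e) δ (q ^ a),
        hb, pow_add, mul_assoc]
    rw [← hsplit] at hdvd0
    have hcopa : Nat.Coprime n (q ^ a) :=
      Nat.Coprime.coprime_dvd_right (pow_dvd_pow q (by omega : a ≤ m)) hcop
    have hdvd2 : n ∣ δ * (q ^ e - 1) := hcopa.dvd_of_dvd_mul_right hdvd0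
    have hsum : δ * (q ^ e - 1) + (q ^ (m - 1) + q ^ s) * (q ^ e - 1) = n * (q ^ e - 1) := by
      rw [← add_mul, hδr]
    have hdvd3 : n ∣ (q ^ (m - 1) + q ^ s) * (q ^ e - 1) :=
      (Nat.dvd_add_right hdvd2).mp (by rw [hsum]; exact dvd_mul_right n _)
    have hler : q ^ (m - 1) + q ^ s ≤ (q ^ (m - 1) + q ^ s) * q ^ e :=
      Nat.le_mul_of_pos_right _ (hqmpos e)
    have hmod2 : q ^ (m - 1) + q ^ s ≡ (q ^ (m - 1) + q ^ s) * q ^ e [MOD n] := by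
      refine (Nat.modEq_iff_dvd' hler).mpr ?_
      rw [Nat.mul_sub, mul_one] at hdvd3
      exact hdvd3
    have hexp : (q ^ (m - 1) + q ^ s) * q ^ e = q ^ (m - 1 + e) + q ^ (s + e) := by
      rw [add_mul, ← pow_add, ← pow_add]
    have hmodA : q ^ (m - 1 + e) ≡ q ^ (e - 1) [MOD n] := by
      rw [show m - 1 + e = (e - 1) + m from by omega, pow_add]
      have h8 := Nat.ModEq.mul_left (q ^ (e - 1)) hqm_mod
      rwa [mul_one] at h8
    obtain ⟨t, htlt, htmod, htor⟩ :
        ∃ t, t < m ∧ q ^ (s + e) ≡ q ^ t [MOD n] ∧ (t = s + e ∨ t + m = s + e) := by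
      rcases Nat.lt_or_ge (s + e) m with hc | hc
      · exact ⟨s + e, hc, Nat.ModEq.refl _, Or.inl rfl⟩
      · refine ⟨s + e - m, by omega, ?_, Or.inr (by omega)⟩
        have h5 : q ^ (s + e) = q ^ (s + e - m) * q ^ m := by
          rw [← pow_add]; congr 1; omega
        rw [h5]
        have h9 := Nat.ModEq.mul_left (q ^ (s + e - m)) hqm_mod
        rwa [mul_one] at h9
    have hfinal : q ^ (e - 1) + q ^ t ≡ q ^ (m - 1) + q ^ s [MOD n] := by
      calc q ^ (e - 1) + q ^ t
          ≡ q ^ (m - 1 + e) + q ^ (s + e) [MOD n] := Nat.ModEq.add hmodA.symm htmod.symm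
        _ = (q ^ (m - 1) + q ^ s) * q ^ e := hexp.symm
        _ ≡ q ^ (m - 1) + q ^ s [MOD n] := hmod2.symm
    have hub1 : q ^ (e - 1) ≤ q ^ (m - 2) := Nat.pow_le_pow_right hq1 (by omega)
    have hub2 : q ^ t ≤ q ^ (m - 1) := Nat.pow_le_pow_right hq1 (by omega)
    have hub3 : q ^ s ≤ q ^ (m - 2) := Nat.pow_le_pow_right hq1 hsm
    have hblt1 : q ^ (e - 1) + q ^ t < n := by linarith
    have hblt2 : q ^ (m - 1) + q ^ s < n := by linarith
    have heq2 : q ^ (e - 1) + q ^ t = q ^ (m - 1) + q ^ s := by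
      have h6 : (q ^ (e - 1) + q ^ t) % n = (q ^ (m - 1) + q ^ s) % n := hfinal
      rwa [Nat.mod_eq_of_lt hblt1, Nat.mod_eq_of_lt hblt2] at h6
    rcases pow_swap hq2 heq2 with ⟨h7, h8⟩ | ⟨h7, h8⟩ <;> omega
  have hinj : Set.InjOn (fun j : ℕ => δ * q ^ j % n) (Finset.range m) := by
    intro a ha b hb hab2
    simp only [Finset.coe_range, Set.mem_Iio] at ha hb
    rcases lt_trichotomy a b with h | h | h
    · exact absurd hab2 (core a b h hb)
    · exact h
    · exact absurd hab2.symm (core b a h ha)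
  rw [Finset.card_image_of_injOn hinj, Finset.card_range]
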